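/- Let C be a non-zero graded submodule of M. Then C is a graded strongly classical 2-absorbing second submodule of M if and only if for all graded ideals I = ⊕_{α∈G} I_α, J = ⊕_{β∈G} J_β, K = ⊕_{γ∈G} K_γ of R, all α, β, γ ∈ G, and every graded submodule N of M with I_α·J_β·K_γ·C ⊆ N, either J_β·K_γ·C ⊆ N or I_α·J_β·C ⊆ N or I_α·K_γ·C ⊆ N. -/

import Mathlib

open Pointwise

section GradedDefs

variable {G : Type*} [Group G] [DecidableEq G] {R : Type*} [CommRing R]
  {M : Type*} [AddCommGroup M] [Module R M]

/-- `R` is a `G`-graded commutative ring via the additive subgroups `𝒜 α`: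
`R_α R_β ⊆ R_{αβ}` and `R = ⊕_{α ∈ G} R_α`. -/
structure IsRingGrading (𝒜 : G → AddSubgroup R) : Prop where
  one_mem : (1 : R) ∈ 𝒜 1
  mul_mem : ∀ ⦃α β : G⦄ ⦃r s : R⦄, r ∈ 𝒜 α → s ∈ 𝒜 β → r * s ∈ 𝒜 (α * β)
  isInternal : DirectSum.IsInternal 𝒜

/-- `M` is a graded module over the `G`-graded ring `R`:
`R_α M_β ⊆ M_{αβ}` and `M = ⊕_{α ∈ G} M_α`. -/
structure IsModuleGrading (𝒜 : G → AddSubgroup R) (ℳ : G → AddSubgroup M) : Prop where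
  smul_mem : ∀ ⦃α β : G⦄ ⦃r : R⦄ ⦃m : M⦄, r ∈ 𝒜 α → m ∈ ℳ β → r • m ∈ ℳ (α * β)
  isInternal : DirectSum.IsInternal ℳ

/-- A submodule `N` of `M` is a graded submodule iff `N = ⊕_{α ∈ G} (N ∩ M_α)`,
equivalently, every element of `N` is a sum of homogeneous elements of `N`. -/
def IsGradedSubmodule (ℳ : G → AddSubgroup M) (N : Submodule R M) : Prop :=
  ∀ n ∈ N, n ∈ Submodule.span R {m : M | m ∈ N ∧ ∃ α, m ∈ ℳ α}

/-- An ideal `I` of `R` is a graded ideal iff `I = ⊕_{α ∈ G} (I ∩ R_α)`. -/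
def IsGradedIdeal (𝒜 : G → AddSubgroup R) (I : Ideal R) : Prop :=
  ∀ r ∈ I, r ∈ Ideal.span {s : R | s ∈ I ∧ ∃ α, s ∈ 𝒜 α}

/-- A proper graded submodule `C` of `M` is completely graded irreducible if whenever
`C = ⋂_{λ ∈ Δ} C_λ` for a family of graded submodules `C_λ`, then `C = C_β` for some `β`. -/
def CompletelyGradedIrreducible (ℳ : G → AddSubgroup M) (C : Submodule R M) : Prop :=
  IsGradedSubmodule ℳ C ∧ C ≠ ⊤ ∧
    ∀ S : Set (Submodule R M), (∀ D ∈ S, IsGradedSubmodule ℳ D) → C = sInf S → C ∈ S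

/-- A non-zero graded submodule `C` of `M` is a graded classical 2-absorbing second submodule
if whenever `r, s, t ∈ h(R)`, `U` is a completely graded irreducible submodule of `M` and
`r·s·t·C ⊆ U`, then `r·s·C ⊆ U` or `s·t·C ⊆ U` or `r·t·C ⊆ U`. -/
def IsGrClassical2AbsorbingSecond (𝒜 : G → AddSubgroup R) (ℳ : G → AddSubgroup M)
    (C : Submodule R M) : Prop :=
  C ≠ ⊥ ∧ IsGradedSubmodule ℳ C ∧
    ∀ r s t : R, (∃ α, r ∈ 𝒜 α) → (∃ β, s ∈ 𝒜 β) → (∃ γ, t ∈ 𝒜 γ) →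
      ∀ U : Submodule R M, CompletelyGradedIrreducible ℳ U →
        r • s • t • C ≤ U → (r • s • C ≤ U ∨ s • t • C ≤ U ∨ r • t • C ≤ U)

/-- A non-zero graded submodule `C` of `M` is a graded strongly classical 2-absorbing second
submodule if whenever `r, s, t ∈ h(R)`, `U₁, U₂, U₃` are completely graded irreducible
submodules of `M` and `r·s·t·C ⊆ U₁ ∩ U₂ ∩ U₃`, then `r·s·C ⊆ U₁ ∩ U₂ ∩ U₃` or
`s·t·C ⊆ U₁ ∩ U₂ ∩ U₃` or `r·t·C ⊆ U₁ ∩ U₂ ∩ U₃`. -/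
def IsGrStronglyClassical2AbsorbingSecond (𝒜 : G → AddSubgroup R) (ℳ : G → AddSubgroup M)
    (C : Submodule R M) : Prop :=
  C ≠ ⊥ ∧ IsGradedSubmodule ℳ C ∧
    ∀ r s t : R, (∃ α, r ∈ 𝒜 α) → (∃ β, s ∈ 𝒜 β) → (∃ γ, t ∈ 𝒜 γ) →
      ∀ U₁ U₂ U₃ : Submodule R M, CompletelyGradedIrreducible ℳ U₁ →
        CompletelyGradedIrreducible ℳ U₂ → CompletelyGradedIrreducible ℳ U₃ →
        r • s • t • C ≤ U₁ ⊓ U₂ ⊓ U₃ →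
        (r • s • C ≤ U₁ ⊓ U₂ ⊓ U₃ ∨ s • t • C ≤ U₁ ⊓ U₂ ⊓ U₃ ∨ r • t • C ≤ U₁ ⊓ U₂ ⊓ U₃)

/-- A non-zero graded submodule `S` of `M` is a graded weakly second submodule if whenever
`r, s ∈ h(R)`, `N` is a graded submodule of `M` and `r·s·S ⊆ N`, then `r·S ⊆ N` or `s·S ⊆ N`. -/
def IsGrWeaklySecond (𝒜 : G → AddSubgroup R) (ℳ : G → AddSubgroup M)
    (S : Submodule R M) : Prop :=
  S ≠ ⊥ ∧ IsGradedSubmodule ℳ S ∧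
    ∀ r s : R, (∃ α, r ∈ 𝒜 α) → (∃ β, s ∈ 𝒜 β) →
      ∀ N : Submodule R M, IsGradedSubmodule ℳ N →
        r • s • S ≤ N → (r • S ≤ N ∨ s • S ≤ N)

/-- A proper graded ideal `I` of `R` is a graded 2-absorbing ideal if whenever `r, s, t ∈ h(R)`
with `r·s·t ∈ I`, then `r·s ∈ I` or `r·t ∈ I` or `s·t ∈ I`. -/
def IsGr2AbsorbingIdeal (𝒜 : G → AddSubgroup R) (I : Ideal R) : Prop :=
  I ≠ ⊤ ∧ IsGradedIdeal 𝒜 I ∧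
    ∀ r s t : R, (∃ α, r ∈ 𝒜 α) → (∃ β, s ∈ 𝒜 β) → (∃ γ, t ∈ 𝒜 γ) →
      r * s * t ∈ I → (r * s ∈ I ∨ r * t ∈ I ∨ s * t ∈ I)

end GradedDefs

section Comp
variable {G : Type*} [DecidableEq G] {X : Type*} [AddCommGroup X]

/-- The degree-`γ` component of `x` w.r.t. an internal grading. -/
noncomputable def gcomp (A : G → AddSubgroup X) (h : DirectSum.IsInternal A) (γ : G) (x : X) : X :=
  ((((AddEquiv.ofBijective (DirectSum.coeAddMonoidHom A) h).symm x) γ : A γ) : X)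

variable {A : G → AddSubgroup X} (h : DirectSum.IsInternal A)

lemma gcomp_mem (γ : G) (x : X) : gcomp A h γ x ∈ A γ :=
  ((((AddEquiv.ofBijective (DirectSum.coeAddMonoidHom A) h).symm x) γ : A γ)).2

lemma gcomp_add (γ : G) (x y : X) :
    gcomp A h γ (x + y) = gcomp A h γ x + gcomp A h γ y := by
  unfold gcomp
  rw [map_add]
  rfl

lemma deco_of {γ : G} {x : X} (hx : x ∈ A γ) :
    (AddEquiv.ofBijective (DirectSum.coeAddMonoidHom A) h).symm x
      = DirectSum.of (fun i => A i) γ ⟨x, hx⟩ := by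
  apply (AddEquiv.ofBijective (DirectSum.coeAddMonoidHom A) h).injective
  simp only [AddEquiv.apply_symm_apply, AddEquiv.ofBijective_apply]
  exact (DirectSum.coeAddMonoidHom_of A γ ⟨x, hx⟩).symm

lemma gcomp_of_mem {γ : G} {x : X} (hx : x ∈ A γ) : gcomp A h γ x = x := by
  unfold gcomp; rw [deco_of h hx, DirectSum.of_eq_same]

lemma gcomp_of_mem_ne {γ δ : G} {x : X} (hx : x ∈ A γ) (hne : γ ≠ δ) : gcomp A h δ x = 0 := by
  unfold gcomp; rw [deco_of h hx, DirectSum.of_eq_of_ne _ _ _ hne.symm]; rfl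

lemma gcomp_sum_rep (x : X) : ∃ s : Finset G, x = ∑ i ∈ s, gcomp A h i x := by
  classical
  set e := AddEquiv.ofBijective (DirectSum.coeAddMonoidHom A) h with he
  refine ⟨(e.symm x).support, ?_⟩
  conv_lhs => rw [← e.apply_symm_apply x]
  conv_lhs => rw [← DirectSum.sum_support_of (e.symm x)]
  rw [map_sum]
  refine Finset.sum_congr rfl fun i _ => ?_
  rw [he]
  erw [DirectSum.coeAddMonoidHom_of]
  rfl

lemma gcomp_finsum {ι : Type*} (γ : G) (s : Finset ι) (f : ι → X) :
    gcomp A h γ (∑ i ∈ s, f i) = ∑ i ∈ s, gcomp A h γ (f i) := by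
  classical
  induction s using Finset.induction with
  | empty => simp [gcomp]
  | insert _ _ hni ih => rw [Finset.sum_insert hni, Finset.sum_insert hni, gcomp_add h, ih]

end Comp

section GradedAux
variable {G : Type*} [Group G] [DecidableEq G] {R : Type*} [CommRing R]
  {M : Type*} [AddCommGroup M] [Module R M]
  {𝒜 : G → AddSubgroup R} {ℳ : G → AddSubgroup M}

variable (h𝒜 : IsRingGrading 𝒜) (hℳ : IsModuleGrading 𝒜 ℳ)
set_option linter.unusedSectionVars false
include h𝒜 hℳ

lemma pred_of_homog {N : Submodule R M} {y : M} {η : G} (hy : y ∈ ℳ η) (hyN : y ∈ N) :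
    ∀ γ, gcomp ℳ hℳ.isInternal γ y ∈ N := by
  intro γ
  by_cases hd : η = γ
  · subst hd; rw [gcomp_of_mem _ hy]; exact hyN
  · rw [gcomp_of_mem_ne _ hy hd]; exact N.zero_mem

lemma pred_sum {N : Submodule R M} {ι : Type*} (s : Finset ι) (f : ι → M)
    (hf : ∀ i ∈ s, ∀ γ, gcomp ℳ hℳ.isInternal γ (f i) ∈ N) :
    ∀ γ, gcomp ℳ hℳ.isInternal γ (∑ i ∈ s, f i) ∈ N := by
  intro γ
  rw [gcomp_finsum]
  exact N.sum_mem fun i hi => hf i hi γ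

lemma pred_smul_homog {N : Submodule R M} {h' : R} {δ : G} (hh' : h' ∈ 𝒜 δ) {m : M}
    (hm : ∀ γ, gcomp ℳ hℳ.isInternal γ m ∈ N) :
    ∀ γ, gcomp ℳ hℳ.isInternal γ (h' • m) ∈ N := by
  obtain ⟨s, hs⟩ := gcomp_sum_rep hℳ.isInternal m
  have h2 : h' • m = ∑ i ∈ s, h' • gcomp ℳ hℳ.isInternal i m := by
    conv_lhs => rw [hs]
    rw [Finset.smul_sum]
  rw [h2]
  refine pred_sum h𝒜 hℳ s _ fun i _ γ => ?_
  exact pred_of_homog h𝒜 hℳ (hℳ.smul_mem hh' (gcomp_mem _ i m)) (N.smul_mem h' (hm i)) γ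

lemma pred_smul {N : Submodule R M} (r : R) {m : M}
    (hm : ∀ γ, gcomp ℳ hℳ.isInternal γ m ∈ N) :
    ∀ γ, gcomp ℳ hℳ.isInternal γ (r • m) ∈ N := by
  obtain ⟨s, hs⟩ := gcomp_sum_rep h𝒜.isInternal r
  have h2 : r • m = ∑ i ∈ s, gcomp 𝒜 h𝒜.isInternal i r • m := by
    conv_lhs => rw [hs]
    rw [Finset.sum_smul]
  rw [h2]
  exact pred_sum h𝒜 hℳ s _ fun i _ => pred_smul_homog h𝒜 hℳ (gcomp_mem _ i r) hm

/-- Graded submodules are component-closed. -/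
lemma comp_closed {N : Submodule R M} (hN : IsGradedSubmodule ℳ N) :
    ∀ n ∈ N, ∀ γ, gcomp ℳ hℳ.isInternal γ n ∈ N := by
  intro n hn
  let S : Submodule R M :=
    { carrier := {m | ∀ γ, gcomp ℳ hℳ.isInternal γ m ∈ N}
      add_mem' := fun {a b} ha hb γ => by
        rw [gcomp_add]; exact N.add_mem (ha γ) (hb γ)
      zero_mem' := fun γ => by
        have : (0 : M) ∈ ℳ γ := (ℳ γ).zero_mem
        rw [gcomp_of_mem _ this]; exact N.zero_mem
      smul_mem' := fun r m hm => pred_smul h𝒜 hℳ r hm }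
  have hsub : Submodule.span R {m : M | m ∈ N ∧ ∃ α, m ∈ ℳ α} ≤ S := by
    rw [Submodule.span_le]
    rintro m ⟨hmN, α, hmα⟩
    exact pred_of_homog h𝒜 hℳ hmα hmN
  exact hsub (hN n hn)

lemma graded_inf {N₁ N₂ : Submodule R M} (h1 : IsGradedSubmodule ℳ N₁)
    (h2 : IsGradedSubmodule ℳ N₂) : IsGradedSubmodule ℳ (N₁ ⊓ N₂) := by
  intro n hn
  obtain ⟨s, hs⟩ := gcomp_sum_rep hℳ.isInternal n
  have : ∑ i ∈ s, gcomp ℳ hℳ.isInternal i n ∈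
      Submodule.span R {m : M | m ∈ N₁ ⊓ N₂ ∧ ∃ α, m ∈ ℳ α} := by
    refine Submodule.sum_mem _ fun i _ => Submodule.subset_span ?_
    exact ⟨Submodule.mem_inf.mpr
        ⟨comp_closed h𝒜 hℳ h1 n hn.1 i, comp_closed h𝒜 hℳ h2 n hn.2 i⟩,
      ⟨i, gcomp_mem _ i n⟩⟩
  rwa [← hs] at this

end GradedAux

section Zorn
variable {G : Type*} [Group G] [DecidableEq G] {R : Type*} [CommRing R]
  {M : Type*} [AddCommGroup M] [Module R M]
  {𝒜 : G → AddSubgroup R} {ℳ : G → AddSubgroup M}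

omit [Group G] [DecidableEq G] in
lemma exists_cgi (N : Submodule R M) (hN : IsGradedSubmodule ℳ N) (x : M) (hx : x ∉ N) :
    ∃ U : Submodule R M, CompletelyGradedIrreducible ℳ U ∧ N ≤ U ∧ x ∉ U := by
  set 𝒮 : Set (Submodule R M) := {K | IsGradedSubmodule ℳ K ∧ N ≤ K ∧ x ∉ K} with h𝒮
  have hzorn : ∀ c ⊆ 𝒮, IsChain (· ≤ ·) c → ∀ y ∈ c, ∃ ub ∈ 𝒮, ∀ z ∈ c, z ≤ ub := by
    intro c hc hchain y hy
    haveI : Nonempty c := ⟨⟨y, hy⟩⟩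
    have hdir : Directed (· ≤ ·) (fun D : c => (D : Submodule R M)) :=
      hchain.directedOn.directed_val
    set K := ⨆ D : c, (D : Submodule R M) with hK
    have hmem : ∀ {z}, z ∈ K ↔ ∃ D : c, z ∈ (D : Submodule R M) := fun {z} =>
      Submodule.mem_iSup_of_directed _ hdir
    refine ⟨K, ⟨?_, ?_, ?_⟩, fun z hz => le_iSup (fun D : c => (D : Submodule R M)) ⟨z, hz⟩⟩
    · intro n hn
      obtain ⟨D, hnD⟩ := hmem.mp hn
      have := (hc D.2).1 n hnD
      refine Submodule.span_mono ?_ this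
      rintro m ⟨hmD, α, hmα⟩
      exact ⟨hmem.mpr ⟨D, hmD⟩, α, hmα⟩
    · exact le_trans (hc hy).2.1 (le_iSup (fun D : c => (D : Submodule R M)) ⟨y, hy⟩)
    · intro hxK
      obtain ⟨D, hxD⟩ := hmem.mp hxK
      exact (hc D.2).2.2 hxD
  obtain ⟨U, hNU, hUmax⟩ := zorn_le_nonempty₀ 𝒮 hzorn N ⟨hN, le_refl N, hx⟩
  obtain ⟨hUgr, hNU', hxU⟩ := hUmax.1
  refine ⟨U, ⟨hUgr, ?_, ?_⟩, hNU', hxU⟩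
  · intro h; exact hxU (h ▸ Submodule.mem_top)
  · intro S hSgr hinf
    by_contra hUS
    have hxS : ∀ D ∈ S, x ∈ D := by
      intro D hD
      by_contra hxD
      have hUD : U ≤ D := hinf ▸ sInf_le hD
      have hDS : D ∈ 𝒮 := ⟨hSgr D hD, le_trans hNU' hUD, hxD⟩
      have : D ≤ U := hUmax.2 hDS hUD
      exact hUS ((le_antisymm hUD this) ▸ hD)
    have : x ∈ sInf S := Submodule.mem_sInf.mpr hxS
    exact hxU (hinf ▸ this)

end Zorn

section Badawi
variable {R : Type*} [CommRing R]

lemma lemA (p : R → Prop) (hsub : ∀ x y, p x → p y → p (x - y))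
    (Z : Set R) (hZ : ∀ z ∈ Z, ∀ z' ∈ Z, z + z' ∈ Z)
    (x y : R) (htri : ∀ z ∈ Z, p (x * z) ∨ p (y * z)) :
    (∀ z ∈ Z, p (x * z)) ∨ (∀ z ∈ Z, p (y * z)) := by
  by_cases h : ∀ z ∈ Z, p (x * z)
  · exact Or.inl h
  · push_neg at h
    obtain ⟨z₀, hz₀, hxz₀⟩ := h
    have hyz₀ : p (y * z₀) := (htri z₀ hz₀).resolve_left hxz₀
    refine Or.inr fun z hz => ?_
    rcases htri z hz with h1 | h1
    · rcases htri (z + z₀) (hZ z hz z₀ hz₀) with h2 | h2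
      · exfalso
        have := hsub _ _ h2 h1
        rw [mul_add, add_sub_cancel_left] at this
        exact hxz₀ this
      · have := hsub _ _ h2 hyz₀
        rwa [mul_add, add_sub_cancel_right] at this
    · exact h1

lemma lemE (p : R → Prop) (hsub : ∀ x y, p x → p y → p (x - y))
    (A B D : Set R)
    (hAadd : ∀ z ∈ A, ∀ z' ∈ A, z + z' ∈ A)
    (hBadd : ∀ z ∈ B, ∀ z' ∈ B, z + z' ∈ B)
    (hDadd : ∀ z ∈ D, ∀ z' ∈ D, z + z' ∈ D)
    (h2 : ∀ a ∈ A, ∀ b ∈ B, ∀ c ∈ D, p (a * b) ∨ p (b * c) ∨ p (a * c))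
    (a : R) (ha : a ∈ A) (b₀ : R) (hb₀ : b₀ ∈ B) (c₀ : R) (hc₀ : c₀ ∈ D)
    (hab₀ : ¬p (a * b₀)) (hac₀ : ¬p (a * c₀))
    (hb₀D : ∀ c ∈ D, p (b₀ * c)) (hc₀B : ∀ b ∈ B, p (c₀ * b)) :
    ∀ b ∈ B, ∀ c ∈ D, p (b * c) := by
  intro b hb c hc
  by_contra hbc
  have htriA : ∀ a' ∈ A, p (b * a') ∨ p (c * a') := by
    intro a' ha'
    rcases h2 a' ha' b hb c hc with h | h | h
    · exact Or.inl (by rwa [mul_comm] at h)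
    · exact absurd h hbc
    · exact Or.inr (by rwa [mul_comm] at h)
  rcases lemA p hsub A hAadd b c htriA with hbA | hcA
  · have hab : p (a * b) := by have := hbA a ha; rwa [mul_comm] at this
    have habb₀ : ¬p (a * (b + b₀)) := by
      intro h
      have := hsub _ _ h hab
      rw [mul_add, add_sub_cancel_left] at this
      exact hab₀ this
    have htriD : ∀ c' ∈ D, p (a * c') ∨ p ((b + b₀) * c') := by
      intro c' hc'
      rcases h2 a ha (b + b₀) (hBadd b hb b₀ hb₀) c' hc' with h | h | h
      · exact absurd h habb₀
      · exact Or.inr h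
      · exact Or.inl h
    rcases lemA p hsub D hDadd a (b + b₀) htriD with h | h
    · exact hac₀ (h c₀ hc₀)
    · have h1 := h c hc
      have h2' := hb₀D c hc
      have := hsub _ _ h1 h2'
      rw [add_mul, add_sub_cancel_right] at this
      exact hbc this
  · have hac : p (a * c) := by have := hcA a ha; rwa [mul_comm] at this
    have hacc₀ : ¬p (a * (c + c₀)) := by
      intro h
      have := hsub _ _ h hac
      rw [mul_add, add_sub_cancel_left] at this
      exact hac₀ this
    have htriB : ∀ b' ∈ B, p (a * b') ∨ p ((c + c₀) * b') := by
      intro b' hb'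
      rcases h2 a ha b' hb' (c + c₀) (hDadd c hc c₀ hc₀) with h | h | h
      · exact Or.inl h
      · exact Or.inr (by rwa [mul_comm] at h)
      · exact absurd h hacc₀
    rcases lemA p hsub B hBadd a (c + c₀) htriB with h | h
    · exact hab₀ (h b₀ hb₀)
    · have h1 := h b hb
      have h2' := hc₀B b hb
      have := hsub _ _ h1 h2'
      rw [add_mul, add_sub_cancel_right] at this
      rw [mul_comm] at this
      exact hbc this

lemma lemMain (p : R → Prop) (hsub : ∀ x y, p x → p y → p (x - y))
    (A B D : Set R)
    (hAadd : ∀ z ∈ A, ∀ z' ∈ A, z + z' ∈ A)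
    (hBadd : ∀ z ∈ B, ∀ z' ∈ B, z + z' ∈ B)
    (hDadd : ∀ z ∈ D, ∀ z' ∈ D, z + z' ∈ D)
    (h2 : ∀ a ∈ A, ∀ b ∈ B, ∀ c ∈ D, p (a * b) ∨ p (b * c) ∨ p (a * c)) :
    (∀ b ∈ B, ∀ c ∈ D, p (b * c)) ∨ (∀ a ∈ A, ∀ b ∈ B, p (a * b)) ∨
      (∀ a ∈ A, ∀ c ∈ D, p (a * c)) := by
  by_contra H
  push_neg at H
  obtain ⟨hC1, hC2, hC3⟩ := H
  obtain ⟨a₁, ha₁, b₁, hb₁, hab₁⟩ := hC2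
  obtain ⟨a₂, ha₂, c₂, hc₂, hac₂⟩ := hC3
  have finish : ∀ a ∈ A, ∀ b₀ ∈ B, ∀ c₀ ∈ D, ¬p (a * b₀) → ¬p (a * c₀) →
      (∀ c ∈ D, p (b₀ * c)) → (∀ b ∈ B, p (c₀ * b)) → False := by
    intro a ha b₀ hb₀ c₀ hc₀ hab₀ hac₀ hbD hcB
    obtain ⟨b, hb, c, hc, hbc⟩ := hC1
    exact hbc (lemE p hsub A B D hAadd hBadd hDadd h2 a ha b₀ hb₀ c₀ hc₀ hab₀ hac₀ hbD hcB
      b hb c hc)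
  have htri1 : ∀ c ∈ D, p (a₁ * c) ∨ p (b₁ * c) := by
    intro c hc
    rcases h2 a₁ ha₁ b₁ hb₁ c hc with h | h | h
    · exact absurd h hab₁
    · exact Or.inr h
    · exact Or.inl h
  have htri2 : ∀ b ∈ B, p (a₂ * b) ∨ p (c₂ * b) := by
    intro b hb
    rcases h2 a₂ ha₂ b hb c₂ hc₂ with h | h | h
    · exact Or.inl h
    · exact Or.inr (by rwa [mul_comm] at h)
    · exact absurd h hac₂
  have caseAA : (∀ c ∈ D, p (a₁ * c)) → (∀ b ∈ B, p (a₂ * b)) → False := by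
    intro hA1 hA2
    set a := a₁ + a₂ with hadef
    have ha : a ∈ A := hAadd a₁ ha₁ a₂ ha₂
    have hab : ¬p (a * b₁) := by
      intro h
      have := hsub _ _ h (hA2 b₁ hb₁)
      rw [hadef, add_mul, add_sub_cancel_right] at this
      exact hab₁ this
    have hac : ¬p (a * c₂) := by
      intro h
      have h' : p (a₁ * c₂) := hA1 c₂ hc₂
      have := hsub _ _ h h'
      rw [hadef, add_mul, add_sub_cancel_left] at this
      exact hac₂ this
    have htriD : ∀ c ∈ D, p (a * c) ∨ p (b₁ * c) := by
      intro c hc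
      rcases h2 a ha b₁ hb₁ c hc with h | h | h
      · exact absurd h hab
      · exact Or.inr h
      · exact Or.inl h
    have hb₁D : ∀ c ∈ D, p (b₁ * c) := by
      rcases lemA p hsub D hDadd a b₁ htriD with h | h
      · exact absurd (h c₂ hc₂) hac
      · exact h
    have htriB : ∀ b ∈ B, p (a * b) ∨ p (c₂ * b) := by
      intro b hb
      rcases h2 a ha b hb c₂ hc₂ with h | h | h
      · exact Or.inl h
      · exact Or.inr (by rwa [mul_comm] at h)
      · exact absurd h hac
    have hc₂B : ∀ b ∈ B, p (c₂ * b) := by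
      rcases lemA p hsub B hBadd a c₂ htriB with h | h
      · exact absurd (h b₁ hb₁) hab
      · exact h
    exact finish a ha b₁ hb₁ c₂ hc₂ hab hac hb₁D hc₂B
  rcases lemA p hsub D hDadd a₁ b₁ htri1 with hA1 | hB1 <;>
    rcases lemA p hsub B hBadd a₂ c₂ htri2 with hA2 | hC2'
  · exact caseAA hA1 hA2
  · by_cases hex : ∀ b ∈ B, p (a₂ * b)
    · exact caseAA hA1 hex
    · push_neg at hex
      obtain ⟨b, hb, hab⟩ := hex
      have htriD : ∀ c ∈ D, p (a₂ * c) ∨ p (b * c) := by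
        intro c hc
        rcases h2 a₂ ha₂ b hb c hc with h | h | h
        · exact absurd h hab
        · exact Or.inr h
        · exact Or.inl h
      have hbD : ∀ c ∈ D, p (b * c) := by
        rcases lemA p hsub D hDadd a₂ b htriD with h | h
        · exact absurd (h c₂ hc₂) hac₂
        · exact h
      exact finish a₂ ha₂ b hb c₂ hc₂ hab hac₂ hbD hC2'
  · by_cases hex : ∀ c ∈ D, p (a₁ * c)
    · exact caseAA hex hA2
    · push_neg at hex
      obtain ⟨c, hc, hac⟩ := hex
      have htriB : ∀ b ∈ B, p (a₁ * b) ∨ p (c * b) := by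
        intro b hb
        rcases h2 a₁ ha₁ b hb c hc with h | h | h
        · exact Or.inl h
        · exact Or.inr (by rwa [mul_comm] at h)
        · exact absurd h hac
      have hcB : ∀ b ∈ B, p (c * b) := by
        rcases lemA p hsub B hBadd a₁ c htriB with h | h
        · exact absurd (h b₁ hb₁) hab₁
        · exact h
      exact finish a₁ ha₁ b₁ hb₁ c hc hab₁ hac hB1 hcB
  · by_cases h1 : p (a₁ * c₂)
    · by_cases h2' : p (a₂ * b₁)
      · set a := a₁ + a₂ with hadef
        have ha : a ∈ A := hAadd a₁ ha₁ a₂ ha₂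
        have hab : ¬p (a * b₁) := by
          intro h
          have := hsub _ _ h h2'
          rw [hadef, add_mul, add_sub_cancel_right] at this
          exact hab₁ this
        have hac : ¬p (a * c₂) := by
          intro h
          have := hsub _ _ h h1
          rw [hadef, add_mul, add_sub_cancel_left] at this
          exact hac₂ this
        exact finish a ha b₁ hb₁ c₂ hc₂ hab hac hB1 hC2'
      · exact finish a₂ ha₂ b₁ hb₁ c₂ hc₂ h2' hac₂ hB1 hC2'
    · exact finish a₁ ha₁ b₁ hb₁ c₂ hc₂ hab₁ h1 hB1 hC2'

end Badawi

section SmulAux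
variable {R : Type*} [CommRing R] {M : Type*} [AddCommGroup M] [Module R M]

lemma smul_le_iff' (r : R) (C N : Submodule R M) :
    r • C ≤ N ↔ ∀ m ∈ C, r • m ∈ N := by
  constructor
  · intro h m hm
    exact h (Submodule.smul_mem_pointwise_smul m r C hm)
  · rintro h x ⟨m, hm, rfl⟩
    exact h m hm

lemma smul2_le_iff (r s : R) (C N : Submodule R M) :
    r • s • C ≤ N ↔ ∀ m ∈ C, (r * s) • m ∈ N := by
  rw [← mul_smul, smul_le_iff']

lemma smul3_le_iff (r s t : R) (C N : Submodule R M) :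
    r • s • t • C ≤ N ↔ ∀ m ∈ C, (r * s * t) • m ∈ N := by
  rw [← mul_smul, ← mul_smul, smul_le_iff']

lemma psub' {u v : R} {C N : Submodule R M} (hu : u • C ≤ N) (hv : v • C ≤ N) :
    (u - v) • C ≤ N := by
  rw [smul_le_iff'] at hu hv ⊢
  intro m hm
  rw [sub_smul]
  exact N.sub_mem (hu m hm) (hv m hm)

end SmulAux

section Star
variable {G : Type*} [Group G] [DecidableEq G] {R : Type*} [CommRing R]
  {M : Type*} [AddCommGroup M] [Module R M]
  {𝒜 : G → AddSubgroup R} {ℳ : G → AddSubgroup M}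

omit [Group G] [DecidableEq G] in
lemma star_lemma {C : Submodule R M}
    (hstrong : IsGrStronglyClassical2AbsorbingSecond 𝒜 ℳ C)
    (r s t : R) (hr : ∃ α, r ∈ 𝒜 α) (hs : ∃ β, s ∈ 𝒜 β) (ht : ∃ γ, t ∈ 𝒜 γ)
    (N : Submodule R M) (hN : IsGradedSubmodule ℳ N) (h : r • s • t • C ≤ N) :
    r • s • C ≤ N ∨ s • t • C ≤ N ∨ r • t • C ≤ N := by
  by_contra H
  push_neg at H
  obtain ⟨h1, h2, h3⟩ := H
  obtain ⟨x₁, hx₁, hx₁N⟩ := SetLike.not_le_iff_exists.mp h1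
  obtain ⟨x₂, hx₂, hx₂N⟩ := SetLike.not_le_iff_exists.mp h2
  obtain ⟨x₃, hx₃, hx₃N⟩ := SetLike.not_le_iff_exists.mp h3
  obtain ⟨U₁, hU₁, hNU₁, hxU₁⟩ := exists_cgi N hN x₁ hx₁N
  obtain ⟨U₂, hU₂, hNU₂, hxU₂⟩ := exists_cgi N hN x₂ hx₂N
  obtain ⟨U₃, hU₃, hNU₃, hxU₃⟩ := exists_cgi N hN x₃ hx₃N
  have hle : r • s • t • C ≤ U₁ ⊓ U₂ ⊓ U₃ :=
    le_trans h (le_inf (le_inf hNU₁ hNU₂) hNU₃)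
  rcases hstrong.2.2 r s t hr hs ht U₁ U₂ U₃ hU₁ hU₂ hU₃ hle with hq | hq | hq
  · exact hxU₁ ((le_trans hq (le_trans inf_le_left inf_le_left)) hx₁)
  · exact hxU₂ ((le_trans hq (le_trans inf_le_left inf_le_right)) hx₂)
  · exact hxU₃ ((le_trans hq inf_le_right) hx₃)

end Star

theorem stmt12 {G : Type*} [Group G] [DecidableEq G] {R : Type*} [CommRing R]
    {M : Type*} [AddCommGroup M] [Module R M]
    (𝒜 : G → AddSubgroup R) (ℳ : G → AddSubgroup M)
    (h𝒜 : IsRingGrading 𝒜) (hℳ : IsModuleGrading 𝒜 ℳ)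
    (C : Submodule R M) (hC0 : C ≠ ⊥) (hCgr : IsGradedSubmodule ℳ C) :
    IsGrStronglyClassical2AbsorbingSecond 𝒜 ℳ C ↔
      ∀ I J K : Ideal R, IsGradedIdeal 𝒜 I → IsGradedIdeal 𝒜 J → IsGradedIdeal 𝒜 K →
        ∀ (α β γ : G) (N : Submodule R M), IsGradedSubmodule ℳ N →
          (∀ a b c : R, a ∈ I → a ∈ 𝒜 α → b ∈ J → b ∈ 𝒜 β → c ∈ K → c ∈ 𝒜 γ →
            a • b • c • C ≤ N) →
          ((∀ b c : R, b ∈ J → b ∈ 𝒜 β → c ∈ K → c ∈ 𝒜 γ → b • c • C ≤ N) ∨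
            (∀ a b : R, a ∈ I → a ∈ 𝒜 α → b ∈ J → b ∈ 𝒜 β → a • b • C ≤ N) ∨
            (∀ a c : R, a ∈ I → a ∈ 𝒜 α → c ∈ K → c ∈ 𝒜 γ → a • c • C ≤ N)) := by
  constructor
  · -- forward direction
    intro hstrong I J K hI hJ hK α β γ N hN habc
    set p : R → Prop := fun x => x • C ≤ N with hp
    have hsub : ∀ x y, p x → p y → p (x - y) := fun x y hx hy => psub' hx hy
    set A : Set R := {a | a ∈ I ∧ a ∈ 𝒜 α} with hA
    set B : Set R := {b | b ∈ J ∧ b ∈ 𝒜 β} with hB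
    set D : Set R := {c | c ∈ K ∧ c ∈ 𝒜 γ} with hD
    have hAadd : ∀ z ∈ A, ∀ z' ∈ A, z + z' ∈ A :=
      fun z hz z' hz' => ⟨I.add_mem hz.1 hz'.1, (𝒜 α).add_mem hz.2 hz'.2⟩
    have hBadd : ∀ z ∈ B, ∀ z' ∈ B, z + z' ∈ B :=
      fun z hz z' hz' => ⟨J.add_mem hz.1 hz'.1, (𝒜 β).add_mem hz.2 hz'.2⟩
    have hDadd : ∀ z ∈ D, ∀ z' ∈ D, z + z' ∈ D :=
      fun z hz z' hz' => ⟨K.add_mem hz.1 hz'.1, (𝒜 γ).add_mem hz.2 hz'.2⟩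
    have h2 : ∀ a ∈ A, ∀ b ∈ B, ∀ c ∈ D, p (a * b) ∨ p (b * c) ∨ p (a * c) := by
      rintro a ⟨haI, haα⟩ b ⟨hbJ, hbβ⟩ c ⟨hcK, hcγ⟩
      have h := habc a b c haI haα hbJ hbβ hcK hcγ
      rcases star_lemma hstrong a b c ⟨α, haα⟩ ⟨β, hbβ⟩ ⟨γ, hcγ⟩ N hN h with hq | hq | hq
      · exact Or.inl (by rw [hp]; simpa [mul_smul] using hq)
      · exact Or.inr (Or.inl (by rw [hp]; simpa [mul_smul] using hq))
      · exact Or.inr (Or.inr (by rw [hp]; simpa [mul_smul] using hq))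
    rcases lemMain p hsub A B D hAadd hBadd hDadd h2 with hq | hq | hq
    · refine Or.inl fun b c hbJ hbβ hcK hcγ => ?_
      have := hq b ⟨hbJ, hbβ⟩ c ⟨hcK, hcγ⟩
      rw [hp] at this
      rwa [← mul_smul]
    · refine Or.inr (Or.inl fun a b haI haα hbJ hbβ => ?_)
      have := hq a ⟨haI, haα⟩ b ⟨hbJ, hbβ⟩
      rw [hp] at this
      rwa [← mul_smul]
    · refine Or.inr (Or.inr fun a c haI haα hcK hcγ => ?_)
      have := hq a ⟨haI, haα⟩ c ⟨hcK, hcγ⟩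
      rw [hp] at this
      rwa [← mul_smul]
  · -- backward direction
    intro hyp
    refine ⟨hC0, hCgr, ?_⟩
    rintro r s t ⟨α, hr⟩ ⟨β, hs⟩ ⟨γ, ht⟩ U₁ U₂ U₃ hU₁ hU₂ hU₃ hle
    set N : Submodule R M := U₁ ⊓ U₂ ⊓ U₃ with hNdef
    have hNgr : IsGradedSubmodule ℳ N :=
      graded_inf h𝒜 hℳ (graded_inf h𝒜 hℳ hU₁.1 hU₂.1) hU₃.1
    have hspan : ∀ (u : R), (∃ δ, u ∈ 𝒜 δ) → IsGradedIdeal 𝒜 (Ideal.span {u}) := by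
      rintro u ⟨δ, hu⟩ x hx
      refine Ideal.span_mono ?_ hx
      rintro y rfl
      exact ⟨Ideal.subset_span rfl, δ, hu⟩
    have hmain : ∀ a b c : R, a ∈ Ideal.span {r} → a ∈ 𝒜 α → b ∈ Ideal.span {s} →
        b ∈ 𝒜 β → c ∈ Ideal.span {t} → c ∈ 𝒜 γ → a • b • c • C ≤ N := by
      intro a b c haI _ hbJ _ hcK _
      obtain ⟨x, rfl⟩ := Ideal.mem_span_singleton.mp haI
      obtain ⟨y, rfl⟩ := Ideal.mem_span_singleton.mp hbJ
      obtain ⟨z, rfl⟩ := Ideal.mem_span_singleton.mp hcK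
      rw [smul3_le_iff]
      intro m hm
      have h1 : (r * s * t) • m ∈ N := (smul3_le_iff r s t C N).mp hle m hm
      have h2 : (r * x * (s * y) * (t * z)) • m = (x * y * z) • ((r * s * t) • m) := by
        rw [← mul_smul]
        congr 1
        ring
      rw [h2]
      exact N.smul_mem _ h1
    rcases hyp (Ideal.span {r}) (Ideal.span {s}) (Ideal.span {t})
        (hspan r ⟨α, hr⟩) (hspan s ⟨β, hs⟩) (hspan t ⟨γ, ht⟩) α β γ N hNgr hmain with
      hq | hq | hq
    · exact Or.inr (Or.inl (hq s t (Ideal.subset_span rfl) hs (Ideal.subset_span rfl) ht))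
    · exact Or.inl (hq r s (Ideal.subset_span rfl) hr (Ideal.subset_span rfl) hs)
    · exact Or.inr (Or.inr (hq r t (Ideal.subset_span rfl) hr (Ideal.subset_span rfl) ht))
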